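/- Let G be a 2-vertex-connected outerplanar graph with outer cycle 1,…,n, let f be a bounded face of G, and let i,j ∈ [n] with i ≠ j+1 be such that both [i,j] and its complement [j+1,i−1] contain a vertex of f. Let f1, f2 be the bounded faces containing edges {i−1,i} and {j,j+1}. Then δ_G([i,j]) equals the union of the edges of the weak-dual paths from f1 to f and from f to f2, together with the edges {i−1,i} and {j,j+1}; in particular, f lies on the weak-dual path from f1 to f2. -/

import Mathlib

open scoped Classical

/-- `x` lies strictly between `a` and `b` in the clockwise cyclic order of `Fin n`. -/
def btw {n : ℕ} (a x b : Fin n) : Prop :=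
  (a < x ∧ x < b) ∨ (b < a ∧ (a < x ∨ x < b))

/-- `z` is a chord of the `n`-gon: it joins two distinct, non-consecutive vertices. -/
def IsChordal (n : ℕ) [NeZero n] (z : Sym2 (Fin n)) : Prop :=
  ∃ a b : Fin n, z = s(a, b) ∧ a ≠ b ∧ b ≠ a + 1 ∧ a ≠ b + 1

/-- Two chords cross: their endpoints strictly interleave around the cycle. -/
def ChordCross {n : ℕ} (z w : Sym2 (Fin n)) : Prop :=
  ∃ a b c d : Fin n, z = s(a, b) ∧ w = s(c, d) ∧ _root_.btw a c b ∧ _root_.btw b d a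

/-- A 2-vertex-connected outerplanar graph, encoded by its fixed outerplanar embedding:
the outer (Hamiltonian) cycle `0,1,…,n-1` together with a set of pairwise noncrossing
chords. -/
structure OPGraph (n : ℕ) [NeZero n] where
  chords : Finset (Sym2 (Fin n))
  isChord : ∀ z ∈ chords, IsChordal n z
  noncross : ∀ z ∈ chords, ∀ w ∈ chords, ¬ ChordCross z w

/-- The edges of the outerplanar graph: the outer cycle edges together with the chords. -/
def OPGraph.edge {n : ℕ} [NeZero n] (Gp : OPGraph n) (z : Sym2 (Fin n)) : Prop :=
  (∃ a : Fin n, z = s(a, a + 1)) ∨ z ∈ Gp.chords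

/-- `v` is the clockwise successor of `u` among the vertices of `F`. -/
def succIn {n : ℕ} (F : Finset (Fin n)) (u v : Fin n) : Prop :=
  u ∈ F ∧ v ∈ F ∧ u ≠ v ∧ ∀ w ∈ F, ¬ _root_.btw u w v

/-- `z` is an edge of the boundary cycle of the vertex set `F`. -/
def BoundaryEdge {n : ℕ} (F : Finset (Fin n)) (z : Sym2 (Fin n)) : Prop :=
  ∃ u v : Fin n, z = s(u, v) ∧ succIn F u v

/-- `F` is the vertex set of a bounded face of the outerplanar graph `Gp`:
its cyclically consecutive pairs are edges of `Gp`, and `Gp` has no edge joining two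
non-consecutive vertices of `F`. -/
def OPGraph.IsFace {n : ℕ} [NeZero n] (Gp : OPGraph n) (F : Finset (Fin n)) : Prop :=
  3 ≤ F.card ∧
  (∀ u v : Fin n, succIn F u v → Gp.edge s(u, v)) ∧
  (∀ u ∈ F, ∀ v ∈ F, u ≠ v → Gp.edge s(u, v) → succIn F u v ∨ succIn F v u)

/-- The bounded faces of `Gp`. -/
def OPGraph.Face {n : ℕ} [NeZero n] (Gp : OPGraph n) := {F : Finset (Fin n) // Gp.IsFace F}

/-- The weak dual of `Gp`: vertices are the bounded faces, two faces being adjacent when they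
share a chord of `Gp`. -/
def OPGraph.weakDual {n : ℕ} [NeZero n] (Gp : OPGraph n) : SimpleGraph Gp.Face :=
  SimpleGraph.fromRel
    (fun F F' => ∃ z ∈ Gp.chords, BoundaryEdge F.1 z ∧ BoundaryEdge F'.1 z)


/-- The interval `[i,j]` of vertices going clockwise from `i` to `j` (wrapping around). -/
def interval {n : ℕ} (i j : Fin n) : Set (Fin n) := {k | (k - i).val ≤ (j - i).val}

/-- The cut `δ_G(S)`: all edges of `Gp` with exactly one endpoint in `S`. -/
def OPGraph.cut {n : ℕ} [NeZero n] (Gp : OPGraph n) (S : Set (Fin n)) : Set (Sym2 (Fin n)) :=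
  {z | Gp.edge z ∧ ∃ u v : Fin n, z = s(u, v) ∧ u ∈ S ∧ v ∉ S}

/-- The chords of `Gp` corresponding to the edges of a walk `p` in the weak dual. -/
def pathChords {n : ℕ} [NeZero n] (Gp : OPGraph n) {F1 F2 : Gp.Face}
    (p : Gp.weakDual.Walk F1 F2) : Set (Sym2 (Fin n)) :=
  {z | z ∈ Gp.chords ∧ ∃ F F' : Gp.Face,
    s(F, F') ∈ p.edges ∧ BoundaryEdge F.1 z ∧ BoundaryEdge F'.1 z}

open Fin.CommRing

section Arith
variable {n : ℕ} [NeZero n]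

lemma fin_sub_val (x y : Fin n) :
    (x - y).val = if y.val ≤ x.val then x.val - y.val else n + x.val - y.val := by
  have hx := x.is_lt
  have hy := y.is_lt
  rw [Fin.sub_def]
  simp only []
  show (n - y.val + x.val) % n = _
  split_ifs with h
  · rw [show n - y.val + x.val = n + (x.val - y.val) by omega, Nat.add_mod_left,
      Nat.mod_eq_of_lt (by omega)]
  · rw [Nat.mod_eq_of_lt (by omega)]
    omega

lemma sub_val_zero_iff (x y : Fin n) : (x - y).val = 0 ↔ x = y := by
  constructor
  · intro h
    have : x - y = 0 := Fin.ext h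
    have := sub_eq_zero.mp this
    exact this
  · rintro rfl; simp

lemma btw_iff_val (a x b : Fin n) :
    _root_.btw a x b ↔ 0 < (x - a).val ∧ (x - a).val < (b - a).val := by
  have hx := x.is_lt
  have ha := a.is_lt
  have hb := b.is_lt
  show (a < x ∧ x < b) ∨ (b < a ∧ (a < x ∨ x < b)) ↔ _
  simp only [Fin.lt_def]
  rw [fin_sub_val, fin_sub_val]
  split_ifs <;> omega

end Arith

set_option linter.unusedSectionVars false

section Arcs
variable {n : ℕ} [NeZero n]

/-- The closed arc clockwise from `a` to `b`. -/
def closedArc (a b : Fin n) : Set (Fin n) := {w | (w - a).val ≤ (b - a).val}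

lemma mem_closedArc {a b w : Fin n} : w ∈ closedArc a b ↔ (w - a).val ≤ (b - a).val :=
  Iff.rfl

lemma val_ne_of_ne {a b : Fin n} (h : a ≠ b) : a.val ≠ b.val := fun h' => h (Fin.ext h')

lemma not_mem_closedArc_iff {a b w : Fin n} (hab : a ≠ b) :
    w ∉ closedArc a b ↔ _root_.btw b w a := by
  have := a.is_lt; have := b.is_lt; have := w.is_lt
  have hab' := val_ne_of_ne hab
  simp only [closedArc, Set.mem_setOf_eq, btw_iff_val, fin_sub_val, not_le]
  split_ifs <;> omega

lemma mem_closedArc_rev {a b w : Fin n} (hab : a ≠ b) :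
    w ∈ closedArc b a ↔ (w - a).val = 0 ∨ (b - a).val ≤ (w - a).val := by
  have := a.is_lt; have := b.is_lt; have := w.is_lt
  have hab' := val_ne_of_ne hab
  simp only [closedArc, Set.mem_setOf_eq, fin_sub_val]
  split_ifs <;> omega

lemma arc_total {a b : Fin n} (hab : a ≠ b) (w : Fin n) :
    w ∈ closedArc a b ∨ w ∈ closedArc b a := by
  have := a.is_lt; have := b.is_lt; have := w.is_lt
  have hab' := val_ne_of_ne hab
  simp only [closedArc, Set.mem_setOf_eq, fin_sub_val]
  split_ifs <;> omega

lemma arc_inter {a b w : Fin n} (hab : a ≠ b) (h1 : w ∈ closedArc a b)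
    (h2 : w ∈ closedArc b a) : w = a ∨ w = b := by
  have := a.is_lt; have := b.is_lt; have := w.is_lt
  have hab' := val_ne_of_ne hab
  rcases eq_or_ne w a with rfl | hwa
  · exact Or.inl rfl
  rcases eq_or_ne w b with rfl | hwb
  · exact Or.inr rfl
  exfalso
  have hwa' := val_ne_of_ne hwa
  have hwb' := val_ne_of_ne hwb
  simp only [closedArc, Set.mem_setOf_eq, fin_sub_val] at h1 h2
  split_ifs at h1 h2 <;> omega

lemma btw_not_mem_rev {u v x : Fin n} (h : _root_.btw u x v) : x ∉ closedArc v u := by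
  have := u.is_lt; have := v.is_lt; have := x.is_lt
  rw [btw_iff_val] at h
  simp only [closedArc, Set.mem_setOf_eq, fin_sub_val] at *
  split_ifs at * <;> omega

lemma not_btw_mem_rev {u v x : Fin n} (huv : u ≠ v) (h : ¬ _root_.btw u x v) :
    x ∈ closedArc v u := by
  have := u.is_lt; have := v.is_lt; have := x.is_lt
  have := val_ne_of_ne huv
  rw [btw_iff_val] at h
  simp only [closedArc, Set.mem_setOf_eq, fin_sub_val] at *
  split_ifs at * <;> omega

end Arcs

section Succ
variable {n : ℕ} [NeZero n]

lemma sub_val_of_le {A B : Fin n} (h : B.val ≤ A.val) : (A - B).val = A.val - B.val := by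
  rw [fin_sub_val]; split_ifs <;> omega

lemma succ_exists {F : Finset (Fin n)} {u v0 : Fin n} (hu : u ∈ F) (hv0 : v0 ∈ F)
    (hne : v0 ≠ u) : ∃ v, succIn F u v := by
  have hT : (F.erase u).Nonempty := ⟨v0, Finset.mem_erase.2 ⟨hne, hv0⟩⟩
  obtain ⟨v, hvT, hmin⟩ := Finset.exists_min_image (F.erase u) (fun w => (w - u).val) hT
  refine ⟨v, hu, (Finset.mem_erase.1 hvT).2, Ne.symm (Finset.mem_erase.1 hvT).1, ?_⟩
  intro w hw hbtw
  rw [btw_iff_val] at hbtw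
  have hwu : w ≠ u := fun h => absurd ((sub_val_zero_iff w u).2 h) (by omega)
  have := hmin w (Finset.mem_erase.2 ⟨hwu, hw⟩)
  omega

lemma pred_exists {F : Finset (Fin n)} {v u0 : Fin n} (hv : v ∈ F) (hu0 : u0 ∈ F)
    (hne : u0 ≠ v) : ∃ u, succIn F u v := by
  have hT : (F.erase v).Nonempty := ⟨u0, Finset.mem_erase.2 ⟨hne, hu0⟩⟩
  obtain ⟨u, huT, hmin⟩ := Finset.exists_min_image (F.erase v) (fun w => (v - w).val) hT
  refine ⟨u, (Finset.mem_erase.1 huT).2, hv, (Finset.mem_erase.1 huT).1, ?_⟩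
  intro w hw hbtw
  rw [btw_iff_val] at hbtw
  have hwv : w ≠ v := by
    intro h; subst h
    have : (w - u).val = (w - u).val := rfl
    omega
  have hkey : v - w = (v - u) - (w - u) := by ring
  have h1 : ((v - u) - (w - u)).val = (v - u).val - (w - u).val :=
    sub_val_of_le (le_of_lt hbtw.2)
  have := hmin w (Finset.mem_erase.2 ⟨hwv, hw⟩)
  rw [hkey, h1] at this
  omega

lemma locate {F : Finset (Fin n)} {x u0 v0 : Fin n} (h0 : u0 ∈ F) (h1 : v0 ∈ F)
    (h01 : u0 ≠ v0) (hx : x ∉ F) : ∃ u v, succIn F u v ∧ _root_.btw u x v := by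
  have hT : F.Nonempty := ⟨u0, h0⟩
  obtain ⟨u, huF, hmin⟩ := Finset.exists_min_image F (fun w => (x - w).val) hT
  have hother : ∃ w ∈ F, w ≠ u := by
    rcases eq_or_ne u0 u with rfl | h
    · exact ⟨v0, h1, Ne.symm h01⟩
    · exact ⟨u0, h0, h⟩
  obtain ⟨w0, hw0, hw0u⟩ := hother
  obtain ⟨v, hsucc⟩ := succ_exists huF hw0 hw0u
  refine ⟨u, v, hsucc, ?_⟩
  rw [btw_iff_val]
  have hxu : x ≠ u := fun h => hx (h ▸ huF)
  have hpos : 0 < (x - u).val := by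
    rcases Nat.eq_zero_or_pos (x - u).val with h | h
    · exact absurd ((sub_val_zero_iff x u).1 h) hxu
    · exact h
  refine ⟨hpos, ?_⟩
  by_contra hge
  push_neg at hge
  have hkey : x - v = (x - u) - (v - u) := by ring
  have h2 : ((x - u) - (v - u)).val = (x - u).val - (v - u).val := sub_val_of_le hge
  have hvu : 0 < (v - u).val := by
    rcases Nat.eq_zero_or_pos (v - u).val with h | h
    · exact absurd (((sub_val_zero_iff v u).1 h).symm) hsucc.2.2.1
    · exact h
  have := hmin v hsucc.2.1
  rw [hkey, h2] at this
  omega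

lemma succIn_subset {F : Finset (Fin n)} {u v : Fin n} (h : succIn F u v) :
    ∀ w ∈ F, w ∈ closedArc v u := fun w hw =>
  not_btw_mem_rev h.2.2.1 (h.2.2.2 w hw)

lemma val_one' (hn : 1 < n) : (1 : Fin n).val = 1 := by
  rw [Fin.val_one']; exact Nat.mod_eq_of_lt hn

lemma neg_one_val (hn : 1 < n) : ((-1 : Fin n)).val = n - 1 := by
  have h1 : (-1 : Fin n) = 0 - 1 := by ring
  have h0 : ((0 : Fin n)).val = 0 := Fin.val_zero n
  rw [h1, fin_sub_val, val_one' hn, h0]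
  split_ifs <;> omega

lemma succIn_wrap {F : Finset (Fin n)} {v : Fin n} (hn : 1 < n)
    (h : succIn F (v + 1) v) : F.card ≤ 2 := by
  have hsub : F ⊆ {v + 1, v} := by
    intro w hw
    by_contra hmem
    simp only [Finset.mem_insert, Finset.mem_singleton] at hmem
    push_neg at hmem
    refine h.2.2.2 w hw ?_
    rw [btw_iff_val]
    have hvu : v - (v + 1) = -1 := by ring
    rw [hvu, neg_one_val hn]
    have hpos : 0 < (w - (v + 1)).val := by
      rcases Nat.eq_zero_or_pos (w - (v + 1)).val with h' | h'
      · exact absurd ((sub_val_zero_iff _ _).1 h') hmem.1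
      · exact h'
    have hlt : (w - (v + 1)).val < n - 1 := by
      have hle := Nat.lt_of_lt_of_le (w - (v + 1)).is_lt (le_refl n)
      rcases Nat.lt_or_ge (w - (v + 1)).val (n - 1) with h' | h'
      · exact h'
      · exfalso
        have heq : (w - (v + 1)).val = n - 1 := by omega
        have : w - (v + 1) = -1 := Fin.ext (by rw [heq, neg_one_val hn])
        have : w - (v + 1) = v - (v + 1) := by rw [this, hvu]
        have : w = v := by
          have := sub_left_inj.mp this
          exact this
        exact hmem.2 this
    exact ⟨hpos, hlt⟩
  calc F.card ≤ ({v + 1, v} : Finset (Fin n)).card := Finset.card_le_card hsub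
    _ ≤ 2 := Finset.card_insert_le _ _ |>.trans (by simp)

lemma third_elt {F : Finset (Fin n)} (h : 3 ≤ F.card) (a b : Fin n) :
    ∃ c ∈ F, c ≠ a ∧ c ≠ b := by
  have hle : F.card ≤ (F \ {a, b}).card + ({a, b} : Finset (Fin n)).card :=
    Finset.card_le_card_sdiff_add_card
  have h2 : ({a, b} : Finset (Fin n)).card ≤ 2 :=
    Finset.card_insert_le _ _ |>.trans (by simp)
  have : 0 < (F \ {a, b}).card := by omega
  obtain ⟨c, hc⟩ := Finset.card_pos.1 this
  rw [Finset.mem_sdiff] at hc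
  simp only [Finset.mem_insert, Finset.mem_singleton] at hc
  push_neg at hc
  exact ⟨c, hc.1, hc.2⟩

lemma notBoth {F : Finset (Fin n)} (hcard : 3 ≤ F.card) {a b : Fin n} (hab : a ≠ b)
    (h1 : ∀ w ∈ F, w ∈ closedArc a b) (h2 : ∀ w ∈ F, w ∈ closedArc b a) : False := by
  obtain ⟨c, hcF, hca, hcb⟩ := third_elt hcard a b
  rcases arc_inter hab (h1 c hcF) (h2 c hcF) with h | h
  · exact hca h
  · exact hcb h

end Succ

section Geometry
variable {n : ℕ} [NeZero n]

lemma sub_split (w u a : Fin n) :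
    (w - u).val = if (u - a).val ≤ (w - a).val then (w - a).val - (u - a).val
      else n + (w - a).val - (u - a).val := by
  have h : w - u = (w - a) - (u - a) := by ring
  rw [h, fin_sub_val]

lemma coord_inj {a w w' : Fin n} (h : (w - a).val = (w' - a).val) : w = w' :=
  sub_left_inj.mp (Fin.ext h)

lemma chordal_facts {Gp : OPGraph n} {a b : Fin n} (hz : s(a, b) ∈ Gp.chords) :
    a ≠ b ∧ b ≠ a + 1 ∧ a ≠ b + 1 := by
  obtain ⟨a', b', heq, hne, hc1, hc2⟩ := Gp.isChord _ hz
  rw [Sym2.eq_iff] at heq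
  rcases heq with ⟨rfl, rfl⟩ | ⟨rfl, rfl⟩
  · exact ⟨hne, hc1, hc2⟩
  · exact ⟨hne.symm, hc2, hc1⟩

lemma val_add_one {x : Fin n} (hn : 1 < n) : (x + 1).val = (x.val + 1) % n := by
  rw [Fin.add_def, val_one' hn]

lemma val_add_one_of_lt {x : Fin n} (h : x.val + 1 < n) : (x + 1).val = x.val + 1 := by
  have hn : 1 < n := by omega
  rw [val_add_one hn, Nat.mod_eq_of_lt h]

lemma val_add_one_of_eq {x : Fin n} (h : x.val + 1 = n) : (x + 1).val = 0 := by
  rcases Nat.lt_or_ge 1 n with hn | hn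
  · rw [val_add_one hn, h, Nat.mod_self]
  · exact Nat.lt_one_iff.mp (lt_of_lt_of_le (x + 1).is_lt hn)

/-- Helper: an edge of `Gp` with one endpoint strictly inside `(a,b)` and the other
strictly inside `(b,a)` is impossible (it would cross the chord `s(a,b)`). -/
lemma no_crossing_edge {Gp : OPGraph n} {a b u v : Fin n} (hz : s(a, b) ∈ Gp.chords)
    (he : Gp.edge s(u, v))
    (hu : 0 < (u - a).val ∧ (u - a).val < (b - a).val)
    (hv : (b - a).val < (v - a).val) : False := by
  have hba := (b - a).is_lt
  have hua := (u - a).is_lt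
  have hva := (v - a).is_lt
  rcases he with ⟨c, hc⟩ | huv
  · -- outer edge: v = u + 1 or u = v + 1
    rw [Sym2.eq_iff] at hc
    have hvu : (v - a) = (u - a) + 1 ∨ (u - a) = (v - a) + 1 := by
      rcases hc with ⟨rfl, rfl⟩ | ⟨hu', hv'⟩
      · left; ring
      · right; rw [hu', hv']; ring
    rcases hvu with h | h
    · rcases Nat.lt_or_ge ((u - a).val + 1) n with h' | h'
      · have := val_add_one_of_lt h'
        rw [← h] at this
        omega
      · have h'' : (u - a).val + 1 = n := by omega
        have := val_add_one_of_eq h''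
        rw [← h] at this
        omega
    · rcases Nat.lt_or_ge ((v - a).val + 1) n with h' | h'
      · have := val_add_one_of_lt h'
        rw [← h] at this
        omega
      · have h'' : (v - a).val + 1 = n := by omega
        have := val_add_one_of_eq h''
        rw [← h] at this
        omega
  · -- chord: crossing
    have haa : (a - a).val = 0 := by rw [sub_self]; exact Fin.val_zero n
    refine Gp.noncross _ hz _ huv ⟨a, b, u, v, rfl, rfl, ?_, ?_⟩
    · rw [btw_iff_val]; exact hu
    · rw [btw_iff_val, sub_split v b a, sub_split a b a, haa]
      split_ifs <;> omega

lemma faceSide {Gp : OPGraph n} {F : Finset (Fin n)} (hF : Gp.IsFace F) {a b : Fin n}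
    (hz : s(a, b) ∈ Gp.chords) :
    (∀ w ∈ F, w ∈ closedArc a b) ∨ (∀ w ∈ F, w ∈ closedArc b a) := by
  obtain ⟨hab, hba1, hab1⟩ := chordal_facts hz
  by_contra hcon
  push_neg at hcon
  obtain ⟨⟨x, hxF, hxarc⟩, ⟨y, hyF, hyarc⟩⟩ := hcon
  have hba := (b - a).is_lt
  have hxa := (x - a).is_lt
  have hya := (y - a).is_lt
  have hβ : 0 < (b - a).val := by
    rcases Nat.eq_zero_or_pos (b - a).val with h | h
    · exact absurd ((sub_val_zero_iff b a).1 h) (Ne.symm hab)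
    · exact h
  have hx1 : (b - a).val < (x - a).val := by
    rw [mem_closedArc] at hxarc; omega
  have hy1 : 0 < (y - a).val ∧ (y - a).val < (b - a).val := by
    rw [mem_closedArc_rev hab] at hyarc
    push_neg at hyarc
    omega
  set T := F.filter (fun w => 0 < (w - a).val ∧ (w - a).val < (b - a).val) with hT
  have hyT : y ∈ T := Finset.mem_filter.2 ⟨hyF, hy1⟩
  -- the last vertex of F inside (a,b), and its successor
  obtain ⟨u, huT, humax⟩ := Finset.exists_max_image T (fun w => (w - a).val) ⟨y, hyT⟩
  obtain ⟨huF, hu1⟩ := Finset.mem_filter.1 huT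
  have hua := (u - a).is_lt
  have hxu : x ≠ u := fun h => by rw [h] at hx1; omega
  obtain ⟨v, hsucc⟩ := succ_exists huF hxF hxu
  have hva := (v - a).is_lt
  have hnx : ¬ _root_.btw u x v := hsucc.2.2.2 x hxF
  -- v ∉ open (a,b) and v ≠ a, so (v-a).val ≥ (b-a).val
  have hvβ : (b - a).val ≤ (v - a).val := by
    by_contra hvb
    push_neg at hvb
    have hvu : (v - a).val < (u - a).val := by
      rcases Nat.eq_zero_or_pos (v - a).val with h0 | h0
      · -- v = a : _root_.btw u x v holds
        exfalso
        refine hnx ?_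
        rw [btw_iff_val, sub_split x u a, sub_split v u a]
        split_ifs <;> omega
      · have hvT : v ∈ T := Finset.mem_filter.2 ⟨hsucc.2.1, h0, hvb⟩
        have := humax v hvT
        have hvu' : v ≠ u := Ne.symm hsucc.2.2.1
        have : (v - a).val ≠ (u - a).val := fun h => hvu' (coord_inj h)
        omega
    refine hnx ?_
    rw [btw_iff_val, sub_split x u a, sub_split v u a]
    split_ifs <;> omega
  have hvb : (v - a).val = (b - a).val := by
    by_contra hvgt
    exact no_crossing_edge hz (hF.2.1 u v hsucc) hu1 (by omega)
  have hbF : b ∈ F := by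
    have : v = b := coord_inj hvb
    exact this ▸ hsucc.2.1
  -- the first vertex of F inside (a,b), and its predecessor
  obtain ⟨m, hmT, hmmin⟩ := Finset.exists_min_image T (fun w => (w - a).val) ⟨y, hyT⟩
  obtain ⟨hmF, hm1⟩ := Finset.mem_filter.1 hmT
  have hma := (m - a).is_lt
  have hxm : x ≠ m := fun h => by rw [h] at hx1; omega
  obtain ⟨u', hsucc'⟩ := pred_exists hmF hxF hxm
  have hu'a := (u' - a).is_lt
  have hnx' : ¬ _root_.btw u' x m := hsucc'.2.2.2 x hxF
  have hu'0 : (u' - a).val = 0 := by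
    by_contra h0
    have hu'β : (b - a).val ≤ (u' - a).val := by
      by_contra hub
      push_neg at hub
      have hu'T : u' ∈ T := Finset.mem_filter.2 ⟨hsucc'.1, by omega, hub⟩
      have hmin := hmmin u' hu'T
      have : u' ≠ m := hsucc'.2.2.1
      have : (u' - a).val ≠ (m - a).val := fun h => this (coord_inj h)
      refine hnx' ?_
      rw [btw_iff_val, sub_split x u' a, sub_split m u' a]
      split_ifs <;> omega
    rcases Nat.eq_or_lt_of_le hu'β with heq | hlt
    · -- u' = b : _root_.btw b x m holds
      refine hnx' ?_
      rw [btw_iff_val, sub_split x u' a, sub_split m u' a]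
      split_ifs <;> omega
    · -- u' strictly beyond b : crossing edge s(u', m)
      have hedge : Gp.edge s(u', m) := hF.2.1 u' m hsucc'
      have hedge' : Gp.edge s(m, u') := by rwa [Sym2.eq_swap] at hedge
      exact no_crossing_edge hz hedge' hm1 hlt
  have haF : a ∈ F := by
    have : u' = a := coord_inj (by rw [hu'0, sub_self]; exact (Fin.val_zero n).symm)
    exact this ▸ hsucc'.1
  -- now a, b ∈ F and s(a,b) is an edge: contradiction with x, y
  rcases hF.2.2 a haF b hbF hab (Or.inr hz) with h | h
  · exact h.2.2.2 y hyF (by rw [btw_iff_val]; exact hy1)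
  · refine h.2.2.2 x hxF ?_
    have haa : (a - a).val = 0 := by rw [sub_self]; exact Fin.val_zero n
    rw [btw_iff_val, sub_split x b a, sub_split a b a, haa]
    split_ifs <;> omega

end Geometry

section Rigid
variable {n : ℕ} [NeZero n]

lemma face_n3 {Gp : OPGraph n} {F : Finset (Fin n)} (hF : Gp.IsFace F) : 3 ≤ n :=
  le_trans hF.1 (le_trans (Finset.card_le_univ F) (by simp))

lemma rigid_aux {Gp : OPGraph n} {F F' : Finset (Fin n)} (hF : Gp.IsFace F)
    (hF' : Gp.IsFace F') {a b : Fin n} (hs : succIn F a b) (hs' : succIn F' a b)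
    {x : Fin n} (hxF : x ∈ F) (hxF' : x ∉ F') : False := by
  have hn3 : 3 ≤ n := face_n3 hF
  have haF := hs.1
  have hbF := hs.2.1
  have hab := hs.2.2.1
  have haF' := hs'.1
  have hbF' := hs'.2.1
  have hbb : (b - b).val = 0 := by rw [sub_self]; exact Fin.val_zero n
  have hL := (a - b).is_lt
  have hLpos : 0 < (a - b).val := by
    rcases Nat.eq_zero_or_pos (a - b).val with h | h
    · exact absurd ((sub_val_zero_iff a b).1 h) hab
    · exact h
  have hsubF : ∀ w ∈ F, w ∈ closedArc b a := succIn_subset hs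
  have hsubF' : ∀ w ∈ F', w ∈ closedArc b a := succIn_subset hs'
  have hsx := (x - b).is_lt
  have hsxL : (x - b).val ≤ (a - b).val := hsubF x hxF
  have hsx0 : 0 < (x - b).val := by
    rcases Nat.eq_zero_or_pos (x - b).val with h | h
    · exact absurd ((sub_val_zero_iff x b).1 h) (fun he => hxF' (he ▸ hbF'))
    · exact h
  have hsxL' : (x - b).val < (a - b).val := by
    rcases Nat.eq_or_lt_of_le hsxL with h | h
    · exact absurd (coord_inj h) (fun he => hxF' (he ▸ haF'))
    · exact h
  obtain ⟨u, v, hsucc, hbtw⟩ := locate haF' hbF' hab hxF'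
  have hsu := (u - b).is_lt
  have hsv := (v - b).is_lt
  have hsuL : (u - b).val ≤ (a - b).val := hsubF' u hsucc.1
  have hsvL : (v - b).val ≤ (a - b).val := hsubF' v hsucc.2.1
  rw [btw_iff_val] at hbtw
  rcases Nat.lt_or_ge (v - b).val (u - b).val with hcase | hcase
  · -- the pair (u,v) wraps past b and a
    by_cases hua : u = a
    · by_cases hvb : v = b
      · -- (u,v) = (a,b) : _root_.btw a x b contradicts x ∈ closedArc b a
        have h1 : (u - b).val = (a - b).val := by rw [hua]
        have h2 : (v - b).val = 0 := by rw [hvb]; exact hbb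
        rw [sub_split x u b, sub_split v u b] at hbtw
        split_ifs at hbtw <;> omega
      · -- b is strictly between u and v
        have hsv0 : (v - b).val ≠ 0 := fun h => hvb ((sub_val_zero_iff v b).1 h)
        have hsuL' : (u - b).val = (a - b).val := by rw [hua]
        refine hsucc.2.2.2 b hbF' ?_
        rw [btw_iff_val, sub_split b u b, sub_split v u b, hbb]
        split_ifs <;> omega
    · -- a is strictly between u and v
      have hsuL' : (u - b).val ≠ (a - b).val := fun h => hua (coord_inj h)
      refine hsucc.2.2.2 a haF' ?_
      rw [btw_iff_val, sub_split a u b, sub_split v u b]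
      split_ifs <;> omega
  · -- the arc from u to v stays inside [b,a]
    have he := hF'.2.1 u v hsucc
    rcases he with ⟨c, hc⟩ | hchord
    · rw [Sym2.eq_iff] at hc
      rcases hc with ⟨rfl, rfl⟩ | ⟨hu', hv'⟩
      · -- v = u + 1 : nothing strictly between
        have h1 : (u + 1 - u) = (1 : Fin n) := by ring
        have h2 : (u + 1 - u).val = 1 := by rw [h1]; exact val_one' (by omega)
        omega
      · -- u = v + 1 : face would have ≤ 2 vertices
        have huv1 : u = v + 1 := by rw [hu', hv']
        have := succIn_wrap (n := n) (by omega) (huv1 ▸ hsucc)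
        have := hF'.1
        omega
    · -- chord case : F lies inside [u,v], but contains a and b
      have hFuv : ∀ w ∈ F, w ∈ closedArc u v := by
        rcases faceSide hF hchord with h | h
        · exact h
        · exact absurd (h x hxF) (btw_not_mem_rev (by rw [btw_iff_val]; exact hbtw))
      have haarc := hFuv a haF
      have hbarc := hFuv b hbF
      rw [mem_closedArc, sub_split a u b, sub_split v u b] at haarc
      rw [mem_closedArc, sub_split b u b, sub_split v u b, hbb] at hbarc
      have hkey : (u - b).val = 0 ∧ (v - b).val = (a - b).val := by
        split_ifs at haarc hbarc <;> omega
      have hub : u = b := (sub_val_zero_iff u b).1 hkey.1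
      have hva : v = a := coord_inj hkey.2
      obtain ⟨c, hcF', hca, hcb⟩ := third_elt hF'.1 a b
      have hsc := (c - b).is_lt
      have hscL : (c - b).val ≤ (a - b).val := hsubF' c hcF'
      have hsc0 : (c - b).val ≠ 0 := fun h => hcb ((sub_val_zero_iff c b).1 h)
      have hscL' : (c - b).val ≠ (a - b).val := fun h => hca (coord_inj h)
      refine hsucc.2.2.2 c hcF' ?_
      rw [btw_iff_val, hub, hva]
      omega

lemma rigid {Gp : OPGraph n} {F F' : Finset (Fin n)} (hF : Gp.IsFace F)
    (hF' : Gp.IsFace F') {a b : Fin n} (hs : succIn F a b) (hs' : succIn F' a b) :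
    F = F' := by
  by_contra h
  have : ∃ x, (x ∈ F ∧ x ∉ F') ∨ (x ∈ F' ∧ x ∉ F) := by
    by_contra hc
    push_neg at hc
    refine h (Finset.ext fun x => ⟨fun hx => ?_, fun hx => ?_⟩)
    · exact (hc x).1 hx
    · exact (hc x).2 hx
  obtain ⟨x, ⟨h1, h2⟩ | ⟨h1, h2⟩⟩ := this
  · exact rigid_aux hF hF' hs hs' h1 h2
  · exact rigid_aux hF' hF hs' hs h1 h2

end Rigid

section Dual
variable {n : ℕ} [NeZero n]

lemma bdry_cases {F : Finset (Fin n)} {a b : Fin n} (h : BoundaryEdge F s(a, b)) :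
    succIn F a b ∨ succIn F b a := by
  obtain ⟨u, v, huv, hs⟩ := h
  rw [Sym2.eq_iff] at huv
  rcases huv with ⟨rfl, rfl⟩ | ⟨rfl, rfl⟩
  · exact Or.inl hs
  · exact Or.inr hs

lemma bdry_mem {F : Finset (Fin n)} {a b : Fin n} (h : BoundaryEdge F s(a, b)) :
    a ∈ F ∧ b ∈ F := by
  rcases bdry_cases h with h' | h'
  · exact ⟨h'.1, h'.2.1⟩
  · exact ⟨h'.2.1, h'.1⟩

lemma self_mem_arc_left (a b : Fin n) : a ∈ closedArc a b := by
  rw [mem_closedArc, sub_self]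
  exact Nat.zero_le _ |>.trans_eq' (Fin.val_zero n)

lemma self_mem_arc_right (a b : Fin n) : b ∈ closedArc a b := by
  rw [mem_closedArc]

lemma mem_arc_cases {a b c : Fin n} (hab : a ≠ b) (h : c ∈ closedArc a b) :
    c = a ∨ c = b ∨ _root_.btw a c b := by
  rw [mem_closedArc] at h
  rcases Nat.eq_zero_or_pos (c - a).val with h0 | h0
  · exact Or.inl ((sub_val_zero_iff c a).1 h0)
  · rcases Nat.eq_or_lt_of_le h with h1 | h1
    · exact Or.inr (Or.inl (coord_inj h1))
    · exact Or.inr (Or.inr (by rw [btw_iff_val]; exact ⟨h0, h1⟩))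

lemma noncross_arc {a b c d : Fin n} (hab : a ≠ b)
    (h : ¬ ChordCross s(a, b) s(c, d)) :
    (c ∈ closedArc a b ∧ d ∈ closedArc a b) ∨
      (c ∈ closedArc b a ∧ d ∈ closedArc b a) := by
  rcases arc_total hab c with hc | hc
  · rcases arc_total hab d with hd | hd
    · exact Or.inl ⟨hc, hd⟩
    · -- c ∈ [a,b], d ∈ [b,a]
      rcases mem_arc_cases hab hc with rfl | rfl | hcb
      · exact Or.inr ⟨self_mem_arc_right b c, hd⟩
      · exact Or.inr ⟨self_mem_arc_left c a, hd⟩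
      · rcases mem_arc_cases (Ne.symm hab) hd with rfl | rfl | hdb
        · exact Or.inl ⟨hc, self_mem_arc_right a d⟩
        · exact Or.inl ⟨hc, self_mem_arc_left d b⟩
        · exact absurd ⟨a, b, c, d, rfl, rfl, hcb, hdb⟩ h
  · rcases arc_total hab d with hd | hd
    · -- c ∈ [b,a], d ∈ [a,b]
      rcases mem_arc_cases hab hd with rfl | rfl | hdb
      · exact Or.inr ⟨hc, self_mem_arc_right b d⟩
      · exact Or.inr ⟨hc, self_mem_arc_left d a⟩
      · rcases mem_arc_cases (Ne.symm hab) hc with rfl | rfl | hcb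
        · exact Or.inl ⟨self_mem_arc_right a c, hd⟩
        · exact Or.inl ⟨self_mem_arc_left c b, hd⟩
        · exact absurd ⟨b, a, c, d, Sym2.eq_swap.symm, rfl, hcb, hdb⟩ h
    · exact Or.inr ⟨hc, hd⟩

lemma sameSide {Gp : OPGraph n} {F F' : Finset (Fin n)} (hF : Gp.IsFace F)
    (hF' : Gp.IsFace F') {a b c d : Fin n} (hz : s(a, b) ∈ Gp.chords)
    (hw : s(c, d) ∈ Gp.chords) (hne : s(a, b) ≠ s(c, d))
    (hcF : c ∈ F) (hdF : d ∈ F) (hcF' : c ∈ F') (hdF' : d ∈ F') :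
    ((∀ w ∈ F, w ∈ closedArc a b) ↔ (∀ w ∈ F', w ∈ closedArc a b)) := by
  obtain ⟨hab, -, -⟩ := chordal_facts hz
  obtain ⟨hcd, -, -⟩ := chordal_facts hw
  have hkey : ∀ {X : Finset (Fin n)}, Gp.IsFace X → c ∈ X → d ∈ X →
      ((∀ w ∈ X, w ∈ closedArc a b) ↔ (c ∈ closedArc a b ∧ d ∈ closedArc a b)) := by
    intro X hX hcX hdX
    constructor
    · intro hside; exact ⟨hside c hcX, hside d hdX⟩
    · intro ⟨hca, hda⟩
      rcases noncross_arc hab (Gp.noncross _ hz _ hw) with ⟨h1, h2⟩ | ⟨h1, h2⟩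
      · -- {c,d} ⊆ [a,b]; find endpoint not in [b,a]
        have hnot : c ∉ closedArc b a ∨ d ∉ closedArc b a := by
          by_contra hcon
          push_neg at hcon
          rcases arc_inter hab h1 hcon.1 with rfl | rfl
          · rcases arc_inter hab h2 hcon.2 with rfl | rfl
            · exact hcd rfl
            · exact hne rfl
          · rcases arc_inter hab h2 hcon.2 with rfl | rfl
            · exact hne Sym2.eq_swap
            · exact hcd rfl
        rcases faceSide hX hz with h | h
        · exact h
        · rcases hnot with hnot | hnot
          · exact absurd (h c hcX) hnot
          · exact absurd (h d hdX) hnot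
      · -- {c,d} ⊆ [b,a]: but c,d ∈ closedArc a b was assumed
        rcases arc_inter hab hca h1 with rfl | rfl
        · rcases arc_inter hab hda h2 with rfl | rfl
          · exact absurd rfl hcd
          · exact absurd rfl hne
        · rcases arc_inter hab hda h2 with rfl | rfl
          · exact absurd Sym2.eq_swap hne
          · exact absurd rfl hcd
  rw [hkey hF hcF hdF, hkey hF' hcF' hdF']

lemma face_not_both {Gp : OPGraph n} {F : Finset (Fin n)} (hF : Gp.IsFace F)
    {a b : Fin n} (hab : a ≠ b) (h2 : ∀ w ∈ F, w ∈ closedArc b a) :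
    ¬ (∀ w ∈ F, w ∈ closedArc a b) := fun h1 => notBoth hF.1 hab h1 h2

lemma oppSide {Gp : OPGraph n} {F F' : Finset (Fin n)} (hF : Gp.IsFace F)
    (hF' : Gp.IsFace F') (hne : F ≠ F') {a b : Fin n} (hz : s(a, b) ∈ Gp.chords)
    (hb1 : BoundaryEdge F s(a, b)) (hb2 : BoundaryEdge F' s(a, b)) :
    ((∀ w ∈ F, w ∈ closedArc a b) ↔ ¬ (∀ w ∈ F', w ∈ closedArc a b)) := by
  obtain ⟨hab, -, -⟩ := chordal_facts hz
  rcases bdry_cases hb1 with h1 | h1 <;> rcases bdry_cases hb2 with h2 | h2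
  · exact absurd (rigid hF hF' h1 h2) hne
  · -- F ⊆ [b,a], F' ⊆ [a,b]
    have hFside := succIn_subset h1
    have hF'side := succIn_subset h2
    simp only [face_not_both hF hab hFside, iff_true_intro hF'side]
    simp
  · -- F ⊆ [a,b], F' ⊆ [b,a]
    have hFside := succIn_subset h1
    have hF'side := succIn_subset h2
    simp only [iff_true_intro hFside, true_iff]
    exact fun h => (face_not_both hF' hab hF'side) h
  · exact absurd (rigid hF hF' h1 h2) hne

lemma bdry_pair_eq {Gp : OPGraph n} {P Q R T : Gp.Face} {a b : Fin n}
    (hz : s(a, b) ∈ Gp.chords) (hPQ : P ≠ Q) (hRT : R ≠ T)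
    (hbP : BoundaryEdge P.1 s(a, b)) (hbQ : BoundaryEdge Q.1 s(a, b))
    (hbR : BoundaryEdge R.1 s(a, b)) (hbT : BoundaryEdge T.1 s(a, b)) :
    s(P, Q) = s(R, T) := by
  have hface : ∀ X : Gp.Face, Gp.IsFace X.1 := fun X => X.2
  have hne1 : P.1 ≠ Q.1 := fun h => hPQ (Subtype.ext h)
  have hne2 : R.1 ≠ T.1 := fun h => hRT (Subtype.ext h)
  rcases bdry_cases hbP with h1 | h1 <;> rcases bdry_cases hbQ with h2 | h2 <;>
    rcases bdry_cases hbR with h3 | h3 <;> rcases bdry_cases hbT with h4 | h4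
  all_goals first
    | exact absurd (rigid (hface P) (hface Q) h1 h2) hne1
    | exact absurd (rigid (hface R) (hface T) h3 h4) hne2
    | (exact Sym2.eq_iff.2 (Or.inl ⟨Subtype.ext (rigid (hface P) (hface R) h1 h3),
        Subtype.ext (rigid (hface Q) (hface T) h2 h4)⟩))
    | (exact Sym2.eq_iff.2 (Or.inr ⟨Subtype.ext (rigid (hface P) (hface T) h1 h4),
        Subtype.ext (rigid (hface Q) (hface R) h2 h3)⟩))

end Dual

section Walks
variable {n : ℕ} [NeZero n]

lemma adj_shared {Gp : OPGraph n} {A C : Gp.Face} (h : Gp.weakDual.Adj A C) :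
    A ≠ C ∧ ∃ w ∈ Gp.chords, BoundaryEdge A.1 w ∧ BoundaryEdge C.1 w := by
  rw [OPGraph.weakDual, SimpleGraph.fromRel_adj] at h
  obtain ⟨hne, h⟩ := h
  rcases h with ⟨w, hw, h1, h2⟩ | ⟨w, hw, h1, h2⟩
  · exact ⟨hne, w, hw, h1, h2⟩
  · exact ⟨hne, w, hw, h2, h1⟩

/-- One step of a walk which does not use the chord `s(a,b)` preserves the side. -/
lemma step_side {Gp : OPGraph n} {A C : Gp.Face} (h : Gp.weakDual.Adj A C)
    {a b : Fin n} (hz : s(a, b) ∈ Gp.chords)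
    (hnb : ¬ (BoundaryEdge A.1 s(a, b) ∧ BoundaryEdge C.1 s(a, b))) :
    ((∀ w ∈ A.1, w ∈ closedArc a b) ↔ (∀ w ∈ C.1, w ∈ closedArc a b)) := by
  obtain ⟨hne, w, hw, h1, h2⟩ := adj_shared h
  obtain ⟨c, d, rfl, -, -, -⟩ := Gp.isChord w hw
  by_cases hwz : s(c, d) = s(a, b)
  · rw [hwz] at h1 h2
    exact absurd ⟨h1, h2⟩ hnb
  · exact sameSide A.2 C.2 hz hw (Ne.symm hwz) (bdry_mem h1).1 (bdry_mem h1).2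
      (bdry_mem h2).1 (bdry_mem h2).2

lemma walkA {Gp : OPGraph n} {a b : Fin n} (hz : s(a, b) ∈ Gp.chords)
    {A B : Gp.Face} (q : Gp.weakDual.Walk A B) :
    (∀ F F' : Gp.Face, s(F, F') ∈ q.edges →
      ¬ (BoundaryEdge F.1 s(a, b) ∧ BoundaryEdge F'.1 s(a, b))) →
    ((∀ w ∈ A.1, w ∈ closedArc a b) ↔ (∀ w ∈ B.1, w ∈ closedArc a b)) := by
  induction q with
  | nil => exact fun _ => Iff.rfl
  | cons h' q' ih =>
    intro h
    rename_i A' C' B'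
    have hstep := step_side h' hz
      (h _ _ (by rw [SimpleGraph.Walk.edges_cons]; exact List.mem_cons_self))
    exact hstep.trans (ih (fun F F' hm =>
      h F F' (by rw [SimpleGraph.Walk.edges_cons]; exact List.mem_cons_of_mem _ hm)))

lemma walkB {Gp : OPGraph n} {a b : Fin n} (hz : s(a, b) ∈ Gp.chords)
    {A B : Gp.Face} (q : Gp.weakDual.Walk A B) :
    q.edges.Nodup →
    (∃ F F' : Gp.Face, s(F, F') ∈ q.edges ∧
      BoundaryEdge F.1 s(a, b) ∧ BoundaryEdge F'.1 s(a, b)) →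
    ¬ ((∀ w ∈ A.1, w ∈ closedArc a b) ↔ (∀ w ∈ B.1, w ∈ closedArc a b)) := by
  induction q with
  | nil =>
    rintro - ⟨F, F', hmem, -⟩
    simp [SimpleGraph.Walk.edges_nil] at hmem
  | cons h' q' ih =>
    rintro hnd ⟨F, F', hmem, hbF, hbF'⟩
    rename_i A' C' B'
    rw [SimpleGraph.Walk.edges_cons] at hnd hmem
    have hnd' := List.nodup_cons.1 hnd
    have hFF' : F ≠ F' := by
      have := SimpleGraph.Walk.adj_of_mem_edges (SimpleGraph.Walk.cons h' q')
        (by rw [SimpleGraph.Walk.edges_cons]; exact hmem)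
      exact this.ne
    rcases List.mem_cons.1 hmem with heq | hmemtail
    · -- the crossing edge is the first edge
      have hbAC : BoundaryEdge A'.1 s(a, b) ∧ BoundaryEdge C'.1 s(a, b) := by
        rw [Sym2.eq_iff] at heq
        rcases heq with ⟨rfl, rfl⟩ | ⟨rfl, rfl⟩
        · exact ⟨hbF, hbF'⟩
        · exact ⟨hbF', hbF⟩
      have hopp := oppSide A'.2 C'.2 (fun h => h'.ne (Subtype.ext h)) hz hbAC.1 hbAC.2
      have htail : ∀ G G' : Gp.Face, s(G, G') ∈ q'.edges →
          ¬ (BoundaryEdge G.1 s(a, b) ∧ BoundaryEdge G'.1 s(a, b)) := by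
        rintro G G' hm ⟨hbG, hbG'⟩
        have hGG' : G ≠ G' := (SimpleGraph.Walk.adj_of_mem_edges q' hm).ne
        have := bdry_pair_eq hz hGG' h'.ne hbG hbG' hbAC.1 hbAC.2
        rw [this] at hm
        exact hnd'.1 hm
      have hCB := walkA hz q' htail
      intro hiff
      tauto
    · -- the crossing edge lies in the tail
      have hAC : ((∀ w ∈ A'.1, w ∈ closedArc a b) ↔ (∀ w ∈ C'.1, w ∈ closedArc a b)) := by
        refine step_side h' hz ?_
        rintro ⟨hbA, hbC⟩
        have := bdry_pair_eq hz (fun h => h'.ne h) hFF' hbA hbC hbF hbF'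
        rw [this] at hnd'
        exact hnd'.1 hmemtail
      have := ih hnd'.2 ⟨F, F', hmemtail, hbF, hbF'⟩
      intro hiff
      exact this (hAC.symm.trans hiff)

end Walks

section Sides
variable {n : ℕ} [NeZero n]

lemma arc_coord {i a b w : Fin n} (h : (a - i).val ≤ (b - i).val)
    (hw : w ∈ closedArc a b) : (a - i).val ≤ (w - i).val ∧ (w - i).val ≤ (b - i).val := by
  have := (a - i).is_lt; have := (b - i).is_lt; have := (w - i).is_lt
  rw [mem_closedArc, sub_split w a i, sub_split b a i] at hw
  split_ifs at hw <;> omega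

lemma i_pred_coord {i : Fin n} (hn : 3 ≤ n) : ((i - 1) - i).val = n - 1 := by
  have h : (i - 1) - i = -1 := by ring
  rw [h, neg_one_val (by omega)]

lemma i_pred_succ {i : Fin n} : (i - 1) + 1 = i := by ring

/-- For a chord with one endpoint in `[i,j]` and one outside, the face containing
`{j, j+1}` lies on the `[a,b]` side (the side containing `j, j+1`). -/
lemma sideF2 {Gp : OPGraph n} (hn : 3 ≤ n) {i j : Fin n} (hd : (j - i).val < n - 1)
    {a b : Fin n} (hz : s(a, b) ∈ Gp.chords)
    (ha : (a - i).val ≤ (j - i).val) (hb : ¬ ((b - i).val ≤ (j - i).val))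
    {X : Finset (Fin n)} (hX : Gp.IsFace X) (hj : j ∈ X) (hj1 : j + 1 ∈ X) :
    ∀ w ∈ X, w ∈ closedArc a b := by
  obtain ⟨hab, hba1, hab1⟩ := chordal_facts hz
  have hji := (j - i).is_lt
  have hai := (a - i).is_lt
  have hbi := (b - i).is_lt
  have hj1c : ((j + 1) - i).val = (j - i).val + 1 := by
    have h : (j + 1) - i = (j - i) + 1 := by ring
    rw [h, val_add_one_of_lt (by omega)]
  rcases faceSide hX hz with h | h
  · exact h
  · exfalso
    have e1 := h j hj
    have e2 := h (j + 1) hj1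
    rw [mem_closedArc, sub_split j b i, sub_split a b i] at e1
    rw [mem_closedArc, sub_split (j + 1) b i, sub_split a b i] at e2
    have hnadj : ¬ ((a - i).val = (j - i).val ∧ (b - i).val = ((j + 1) - i).val) := by
      rintro ⟨h1, h2⟩
      exact hba1 (by rw [coord_inj h2, ← coord_inj h1])
    rw [hj1c] at e2 hnadj
    split_ifs at e1 e2 <;> omega

/-- For a chord with one endpoint in `[i,j]` and one outside, the face containing
`{i-1, i}` does not lie on the `[a,b]` side. -/
lemma sideF1 {Gp : OPGraph n} (hn : 3 ≤ n) {i j : Fin n} (hd : (j - i).val < n - 1)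
    {a b : Fin n} (hz : s(a, b) ∈ Gp.chords)
    (ha : (a - i).val ≤ (j - i).val) (hb : ¬ ((b - i).val ≤ (j - i).val))
    {X : Finset (Fin n)} (hX : Gp.IsFace X) (hi1 : i - 1 ∈ X) (hi : i ∈ X) :
    ¬ (∀ w ∈ X, w ∈ closedArc a b) := by
  obtain ⟨hab, hba1, hab1⟩ := chordal_facts hz
  have hji := (j - i).is_lt
  have hai := (a - i).is_lt
  have hbi := (b - i).is_lt
  intro h
  have e1 := h (i - 1) hi1
  have e2 := h i hi
  have hii : (i - i).val = 0 := by rw [sub_self]; exact Fin.val_zero n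
  have hi1c : ((i - 1) - i).val = n - 1 := i_pred_coord hn
  rw [mem_closedArc, sub_split (i - 1) a i, sub_split b a i, hi1c] at e1
  rw [mem_closedArc, sub_split i a i, sub_split b a i, hii] at e2
  have hnadj : ¬ ((a - i).val = 0 ∧ (b - i).val = n - 1) := by
    rintro ⟨h1, h2⟩
    refine hab1 ?_
    have hae : a = i := by
      have : (a - i).val = (i - i).val := by rw [h1, hii]
      exact coord_inj this
    have hbe : b = i - 1 := by
      have : (b - i).val = ((i - 1) - i).val := by rw [h2, hi1c]
      exact coord_inj this
    rw [hae, hbe, i_pred_succ]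
  split_ifs at e1 e2 <;> omega

/-- For a chord with both endpoints on the same side of the cut, two faces which both
have vertices strictly on both sides of the cut lie on the same side of the chord. -/
lemma sameS_iff {Gp : OPGraph n} {i j : Fin n}
    {a b : Fin n} (hz : s(a, b) ∈ Gp.chords)
    (hcond : ((a - i).val ≤ (j - i).val ∧ (b - i).val ≤ (j - i).val) ∨
      ((j - i).val < (a - i).val ∧ (j - i).val < (b - i).val))
    {X Y : Finset (Fin n)} (hX : Gp.IsFace X) (hY : Gp.IsFace Y)
    {x1 x2 y1 y2 : Fin n} (hx1 : x1 ∈ X) (hx2 : x2 ∈ X) (hy1 : y1 ∈ Y) (hy2 : y2 ∈ Y)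
    (hx1S : (x1 - i).val ≤ (j - i).val) (hx2S : ¬ ((x2 - i).val ≤ (j - i).val))
    (hy1S : (y1 - i).val ≤ (j - i).val) (hy2S : ¬ ((y2 - i).val ≤ (j - i).val)) :
    ((∀ w ∈ X, w ∈ closedArc a b) ↔ (∀ w ∈ Y, w ∈ closedArc a b)) := by
  obtain ⟨hab, -, -⟩ := chordal_facts hz
  rcases hcond with ⟨ha, hb⟩ | ⟨ha, hb⟩
  · -- both endpoints in [i,j]
    rcases le_total (a - i).val (b - i).val with hle | hle
    · -- closedArc a b ⊆ S : both sides are false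
      have hXf : ¬ (∀ w ∈ X, w ∈ closedArc a b) := fun h =>
        hx2S (le_trans (arc_coord hle (h x2 hx2)).2 hb)
      have hYf : ¬ (∀ w ∈ Y, w ∈ closedArc a b) := fun h =>
        hy2S (le_trans (arc_coord hle (h y2 hy2)).2 hb)
      exact iff_of_false hXf hYf
    · -- closedArc b a ⊆ S : both sides are true
      have hXf : ∀ w ∈ X, w ∈ closedArc a b := by
        rcases faceSide hX hz with h | h
        · exact h
        · exact absurd (le_trans (arc_coord hle (h x2 hx2)).2 ha) hx2S
      have hYf : ∀ w ∈ Y, w ∈ closedArc a b := by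
        rcases faceSide hY hz with h | h
        · exact h
        · exact absurd (le_trans (arc_coord hle (h y2 hy2)).2 ha) hy2S
      exact iff_of_true hXf hYf
  · -- both endpoints outside [i,j]
    rcases le_total (a - i).val (b - i).val with hle | hle
    · have hXf : ¬ (∀ w ∈ X, w ∈ closedArc a b) := fun h =>
        hx1S.trans_lt (lt_of_lt_of_le ha (arc_coord hle (h x1 hx1)).1) |>.false
      have hYf : ¬ (∀ w ∈ Y, w ∈ closedArc a b) := fun h =>
        hy1S.trans_lt (lt_of_lt_of_le ha (arc_coord hle (h y1 hy1)).1) |>.false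
      exact iff_of_false hXf hYf
    · have hXf : ∀ w ∈ X, w ∈ closedArc a b := by
        rcases faceSide hX hz with h | h
        · exact h
        · exact absurd (lt_of_lt_of_le hb (arc_coord hle (h x1 hx1)).1) (by omega)
      have hYf : ∀ w ∈ Y, w ∈ closedArc a b := by
        rcases faceSide hY hz with h | h
        · exact h
        · exact absurd (lt_of_lt_of_le hb (arc_coord hle (h y1 hy1)).1) (by omega)
      exact iff_of_true hXf hYf

end Sides

theorem stmt_5 (n : ℕ) [NeZero n] (hn : 3 ≤ n) (Gp : OPGraph n)
    (i j : Fin n) (hij : i ≠ j + 1)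
    (f F1 F2 : Gp.Face)
    (hF1 : BoundaryEdge F1.1 s(i - 1, i)) (hF2 : BoundaryEdge F2.1 s(j, j + 1))
    (hin : ∃ k ∈ f.1, k ∈ interval i j) (hout : ∃ k ∈ f.1, k ∉ interval i j)
    (p1 : Gp.weakDual.Walk F1 f) (hp1 : p1.IsPath)
    (p2 : Gp.weakDual.Walk f F2) (hp2 : p2.IsPath) :
    Gp.cut (interval i j) =
        {s(i - 1, i), s(j, j + 1)} ∪ pathChords Gp p1 ∪ pathChords Gp p2 ∧
      ∀ q : Gp.weakDual.Walk F1 F2, q.IsPath → f ∈ q.support := by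
  have hji := (j - i).is_lt
  have hd : (j - i).val < n - 1 := by
    rcases Nat.lt_or_ge (j - i).val (n - 1) with h | h
    · exact h
    · exfalso
      have hji' : (j - i).val = n - 1 := by omega
      have h1 : j - i = -1 := Fin.ext (by rw [hji', neg_one_val (by omega)])
      exact hij (by linear_combination -h1)
  have hii : (i - i).val = 0 := by rw [sub_self]; exact Fin.val_zero n
  have hi1c : ((i - 1) - i).val = n - 1 := i_pred_coord hn
  have hj1c : ((j + 1) - i).val = (j - i).val + 1 := by
    have h : (j + 1) - i = (j - i) + 1 := by ring
    rw [h, val_add_one_of_lt (by omega)]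
  obtain ⟨hi1F1, hiF1⟩ := bdry_mem hF1
  obtain ⟨hjF2, hj1F2⟩ := bdry_mem hF2
  obtain ⟨k, hkf, hkS⟩ := hin
  obtain ⟨k', hk'f, hk'S⟩ := hout
  simp only [interval, Set.mem_setOf_eq] at hkS hk'S
  constructor
  · -- the cut description
    apply Set.eq_of_subset_of_subset
    · rintro z ⟨hedge, u, v, rfl, huS, hvS⟩
      simp only [interval, Set.mem_setOf_eq] at huS hvS
      have hui := (u - i).is_lt
      have hvi := (v - i).is_lt
      rcases hedge with ⟨c, hc⟩ | hchord
      · -- outer edge of the cut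
        rw [Sym2.eq_iff] at hc
        refine Set.mem_union_left _ (Set.mem_union_left _ ?_)
        simp only [Set.mem_insert_iff, Set.mem_singleton_iff]
        rcases hc with ⟨rfl, rfl⟩ | ⟨hu', hv'⟩
        · -- v = u + 1, so u = j
          right
          rcases Nat.lt_or_ge ((u - i).val + 1) n with h' | h'
          · have h2 : ((u + 1) - i).val = (u - i).val + 1 := by
              rw [show (u + 1) - i = (u - i) + 1 by ring, val_add_one_of_lt h']
            have : u = j := coord_inj (a := i) (by omega)
            rw [this]
          · have h2 : ((u + 1) - i).val = 0 := by
              rw [show (u + 1) - i = (u - i) + 1 by ring, val_add_one_of_eq (by omega)]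
            exact absurd (le_of_eq_of_le h2 (Nat.zero_le _)) hvS
        · -- u = v + 1, so v = i - 1 and u = i
          left
          have huv : u = v + 1 := by rw [hu', hv']
          rcases Nat.lt_or_ge ((v - i).val + 1) n with h' | h'
          · have h2 : ((v + 1) - i).val = (v - i).val + 1 := by
              rw [show (v + 1) - i = (v - i) + 1 by ring, val_add_one_of_lt h']
            rw [← huv] at h2
            omega
          · have hv1 : (v - i).val = n - 1 := by omega
            have hvi1 : v = i - 1 := coord_inj (a := i) (by rw [hv1, hi1c])
            have hui' : u = i := by rw [huv, hvi1, i_pred_succ]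
            rw [hui', hvi1, Sym2.eq_swap]
      · -- chord of the cut
        have huv := (chordal_facts hchord).1
        have hs1 := sideF1 hn hd hchord huS hvS F1.2 hi1F1 hiF1
        have hs2 := sideF2 hn hd hchord huS hvS F2.2 hjF2 hj1F2
        rcases faceSide (Gp := Gp) f.2 hchord with hf | hf
        · refine Set.mem_union_left _ (Set.mem_union_right _ ⟨hchord, ?_⟩)
          by_contra hcon
          exact hs1 ((walkA hchord p1
            (fun F F' hm hb => hcon ⟨F, F', hm, hb.1, hb.2⟩)).2 hf)
        · refine Set.mem_union_right _ ⟨hchord, ?_⟩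
          by_contra hcon
          have hsf : ∀ w ∈ f.1, w ∈ closedArc u v :=
            (walkA hchord p2 (fun F F' hm hb => hcon ⟨F, F', hm, hb.1, hb.2⟩)).2 hs2
          exact face_not_both f.2 huv hf hsf
    · rintro z ((hz | hz) | hz)
      · -- z = s(i-1, i)
        simp only [Set.mem_insert_iff, Set.mem_singleton_iff] at hz
        rcases hz with rfl | rfl
        · refine ⟨Or.inl ⟨i - 1, by rw [i_pred_succ]⟩, i, i - 1, Sym2.eq_swap.symm, ?_, ?_⟩
          · simp only [interval, Set.mem_setOf_eq]; omega
          · simp only [interval, Set.mem_setOf_eq]; omega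
        · refine ⟨Or.inl ⟨j, rfl⟩, j, j + 1, rfl, ?_, ?_⟩
          · simp only [interval, Set.mem_setOf_eq]; omega
          · simp only [interval, Set.mem_setOf_eq]; omega
      all_goals {
        obtain ⟨hzc, F, F', hmem, hbF, hbF'⟩ := hz
        obtain ⟨a, b, rfl, -, -, -⟩ := Gp.isChord _ hzc
        have hai := (a - i).is_lt
        have hbi := (b - i).is_lt
        first
          | have hnot := walkB hzc p1 hp1.edges_nodup ⟨F, F', hmem, hbF, hbF'⟩
          | have hnot := walkB hzc p2 hp2.edges_nodup ⟨F, F', hmem, hbF, hbF'⟩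
        rcases le_or_gt (a - i).val (j - i).val with ha | ha <;>
          rcases le_or_gt (b - i).val (j - i).val with hb | hb
        · -- both in S : impossible
          exfalso
          first
            | exact hnot (sameS_iff hzc (Or.inl ⟨ha, hb⟩) F1.2 f.2 hiF1 hi1F1 hkf hk'f
                (by omega) (by omega) hkS hk'S)
            | exact hnot (sameS_iff hzc (Or.inl ⟨ha, hb⟩) f.2 F2.2 hkf hk'f hjF2 hj1F2
                hkS hk'S (by omega) (by omega))
        · exact ⟨Or.inr hzc, a, b, rfl, by simpa [interval] using ha,
            by simp only [interval, Set.mem_setOf_eq]; omega⟩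
        · exact ⟨Or.inr hzc, b, a, Sym2.eq_swap.symm, by simpa [interval] using hb,
            by simp only [interval, Set.mem_setOf_eq]; omega⟩
        · exfalso
          first
            | exact hnot (sameS_iff hzc (Or.inr ⟨ha, hb⟩) F1.2 f.2 hiF1 hi1F1 hkf hk'f
                (by omega) (by omega) hkS hk'S)
            | exact hnot (sameS_iff hzc (Or.inr ⟨ha, hb⟩) f.2 F2.2 hkf hk'f hjF2 hj1F2
                hkS hk'S (by omega) (by omega)) }
  · -- every F1-F2 path passes through f
    intro q hq
    have hTne : (f.1.filter (fun w => (w - i).val ≤ (j - i).val)).Nonempty :=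
      ⟨k, Finset.mem_filter.2 ⟨hkf, hkS⟩⟩
    obtain ⟨u, huT, humax⟩ := Finset.exists_max_image _ (fun w => (w - i).val) hTne
    obtain ⟨huf, huS⟩ := Finset.mem_filter.1 huT
    have hui := (u - i).is_lt
    have hk'i := (k' - i).is_lt
    have hk'u : k' ≠ u := fun h => hk'S (h ▸ huS)
    obtain ⟨v, hsucc⟩ := succ_exists huf hk'f hk'u
    have hvi := (v - i).is_lt
    have hvS : ¬ ((v - i).val ≤ (j - i).val) := by
      intro hvS'
      have hvu : (v - i).val < (u - i).val := by
        have h1 := humax v (Finset.mem_filter.2 ⟨hsucc.2.1, hvS'⟩)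
        have h2 : (v - i).val ≠ (u - i).val := fun h => hsucc.2.2.1 (coord_inj h).symm
        omega
      refine hsucc.2.2.2 k' hk'f ?_
      rw [btw_iff_val, sub_split k' u i, sub_split v u i]
      split_ifs <;> omega
    have he := f.2.2.1 u v hsucc
    rcases he with ⟨c, hc⟩ | hchord
    · rw [Sym2.eq_iff] at hc
      rcases hc with ⟨rfl, rfl⟩ | ⟨hu', hv'⟩
      · -- v = u + 1 : then u = j and f = F2
        have huj : u = j := by
          rcases Nat.lt_or_ge ((u - i).val + 1) n with h' | h'
          · have h2 : ((u + 1) - i).val = (u - i).val + 1 := by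
              rw [show (u + 1) - i = (u - i) + 1 by ring, val_add_one_of_lt h']
            exact coord_inj (a := i) (by omega)
          · have h2 : ((u + 1) - i).val = 0 := by
              rw [show (u + 1) - i = (u - i) + 1 by ring, val_add_one_of_eq (by omega)]
            exact absurd (le_of_eq_of_le h2 (Nat.zero_le _)) hvS
        rw [huj] at hsucc
        have hsuccF2 : succIn F2.1 j (j + 1) := by
          rcases bdry_cases hF2 with h | h
          · exact h
          · have := succIn_wrap (by omega) h
            have := F2.2.1
            omega
        have : f = F2 := Subtype.ext (rigid f.2 F2.2 hsucc hsuccF2)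
        rw [this]
        exact q.end_mem_support
      · -- u = v + 1 : impossible
        have huv1 : u = v + 1 := by rw [hu', hv']
        have := succIn_wrap (by omega) (huv1 ▸ hsucc)
        have := f.2.1
        omega
    · -- the crossing edge of f is a chord
      have hs1 := sideF1 hn hd hchord huS hvS F1.2 hi1F1 hiF1
      have hs2 := sideF2 hn hd hchord huS hvS F2.2 hjF2 hj1F2
      have hex : ∃ F F' : Gp.Face, s(F, F') ∈ q.edges ∧
          BoundaryEdge F.1 s(u, v) ∧ BoundaryEdge F'.1 s(u, v) := by
        by_contra hcon
        exact hs1 ((walkA hchord q (fun F F' hm hb => hcon ⟨F, F', hm, hb.1, hb.2⟩)).2 hs2)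
      obtain ⟨F, F', hmem, hbF, hbF'⟩ := hex
      have hFne : F ≠ F' := (SimpleGraph.Walk.adj_of_mem_edges q hmem).ne
      rcases bdry_cases hbF with hdir | hdir
      · have : f = F := Subtype.ext (rigid f.2 F.2 hsucc hdir)
        rw [this]
        exact SimpleGraph.Walk.fst_mem_support_of_mem_edges q hmem
      · rcases bdry_cases hbF' with hdir' | hdir'
        · have : f = F' := Subtype.ext (rigid f.2 F'.2 hsucc hdir')
          rw [this]
          exact SimpleGraph.Walk.snd_mem_support_of_mem_edges q hmem
        · exact absurd (Subtype.ext (rigid F.2 F'.2 hdir hdir')) hFne
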